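/- arXiv:0711.4185 — 2 statements merged into one kernel-verified Lean document; each statement's English description precedes it below -/
import Mathlib

section
/- Let v and v' be rectangular semistandard tableaux of shapes (a+1) × s and (a+1) × s' whose first a rows are the highest tableaux u_s^{(a)} and u_{s'}^{(a)} respectively, and whose bottom rows b = b_1⋯b_s and b' = b'_1⋯b'_{s'} have entries in {a+1, a+2}. Then H(v ⊗ v') = H(b ⊗ b'), where on the right b and b' are regarded as one-row tableaux (elements of A_1-type crystals after relabeling a+1 ↦ 1, a+2 ↦ 2). -/
/-- Schensted row insertion into a single row: returns the new row and the bumped entry. -/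
def insertRow : List ℕ → ℕ → List ℕ × Option ℕ
  | [], x => ([x], none)
  | y :: ys, x =>
    if x < y then (x :: ys, some y)
    else
      let p := insertRow ys x
      (y :: p.1, p.2)

/-- Schensted row insertion of a letter into a tableau (list of rows). -/
def rsInsert : List (List ℕ) → ℕ → List (List ℕ)
  | [], x => [[x]]
  | r :: rs, x =>
    match (insertRow r x).2 with
    | none => (insertRow r x).1 :: rs
    | some y => (insertRow r x).1 :: rsInsert rs y

/-- Successive insertion of a word. -/
def rsInsertWord (Y : List (List ℕ)) (w : List ℕ) : List (List ℕ) :=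
  w.foldl rsInsert Y

/-- The row word of a tableau: rows read from bottom to top. -/
def rowWord (Y : List (List ℕ)) : List ℕ := Y.reverse.flatten

/-- Length of the `i`-th row (the shape of the tableau). -/
def shapeAt (Y : List (List ℕ)) (i : ℕ) : ℕ := (Y.getD i []).length

/-- The highest element of `B^{r,s}`: row `i` filled with `i`. -/
def highestTab (r s : ℕ) : List (List ℕ) :=
  (List.range r).map fun i => List.replicate s (i + 1)

/-- Energy function: number of boxes of `(b' ← row(b))` outside the
concatenation of the shapes of `b` and `b'`. -/
def energyH (b b' : List (List ℕ)) : ℕ :=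
  let Z := rsInsertWord b' (rowWord b)
  ∑ i ∈ Finset.range Z.length, (shapeAt Z i - (shapeAt b i + shapeAt b' i))

/-- Semistandard Young tableau: rows weakly increasing, nonempty,
shape weakly decreasing, and columns strictly increasing. -/
def IsSSYT (Y : List (List ℕ)) : Prop :=
  (∀ r ∈ Y, List.Chain' (· ≤ ·) r) ∧
  (∀ r ∈ Y, r ≠ []) ∧
  List.Chain' (fun r s => s.length ≤ r.length ∧
    ∀ i < s.length, r.getD i 0 < s.getD i 0) Y


open List

lemma insertRow_le (x : ℕ) : ∀ (r : List ℕ), (∀ z ∈ r, z ≤ x) →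
    insertRow r x = (r ++ [x], none)
  | [], _ => rfl
  | y :: ys, h => by
    have hy : ¬ x < y := not_lt.2 (h y mem_cons_self)
    simp [insertRow, hy, insertRow_le x ys (fun z hz => h z (mem_cons_of_mem _ hz))]

lemma insertRow_bump (x y : ℕ) (r₂ : List ℕ) (hxy : x < y) :
    ∀ (r₁ : List ℕ), (∀ z ∈ r₁, z ≤ x) →
    insertRow (r₁ ++ y :: r₂) x = (r₁ ++ x :: r₂, some y)
  | [], _ => by simp [insertRow, hxy]
  | z :: r₁, h => by
    have hz : ¬ x < z := not_lt.2 (h z mem_cons_self)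
    simp [insertRow, hz, insertRow_bump x y r₂ hxy r₁ (fun u hu => h u (mem_cons_of_mem _ hu))]

lemma rsInsert_app (r : List ℕ) (rs : List (List ℕ)) (x : ℕ) (h : ∀ z ∈ r, z ≤ x) :
    rsInsert (r :: rs) x = (r ++ [x]) :: rs := by
  simp [rsInsert, insertRow_le x r h]

lemma rsInsert_bump (r₁ r₂ : List ℕ) (rs : List (List ℕ)) (x y : ℕ) (hxy : x < y)
    (h : ∀ z ∈ r₁, z ≤ x) :
    rsInsert ((r₁ ++ y :: r₂) :: rs) x = (r₁ ++ x :: r₂) :: rsInsert rs y := by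
  simp [rsInsert, insertRow_bump x y r₂ hxy r₁ h]

lemma rsInsertWord_nil (T : List (List ℕ)) : rsInsertWord T [] = T := rfl

lemma rsInsertWord_cons (T : List (List ℕ)) (x : ℕ) (w : List ℕ) :
    rsInsertWord T (x :: w) = rsInsertWord (rsInsert T x) w := rfl

lemma rsInsertWord_append (T : List (List ℕ)) (w1 w2 : List ℕ) :
    rsInsertWord T (w1 ++ w2) = rsInsertWord (rsInsertWord T w1) w2 :=
  List.foldl_append

lemma rsInsertWord_row (rs : List (List ℕ)) :
    ∀ (w r : List ℕ), Pairwise (· ≤ ·) w → (∀ z ∈ r, ∀ u ∈ w, z ≤ u) →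
    rsInsertWord (r :: rs) w = (r ++ w) :: rs
  | [], r, _, _ => by simp [rsInsertWord]
  | u :: w, r, hp, h => by
    rw [rsInsertWord_cons, rsInsert_app r rs u (fun z hz => h z hz u mem_cons_self),
      rsInsertWord_row rs w (r ++ [u]) hp.of_cons]
    · simp
    · intro z hz v hv
      rcases mem_append.1 hz with hz | hz
      · exact h z hz v (mem_cons_of_mem _ hv)
      · simp only [mem_singleton] at hz
        subst hz
        exact (pairwise_cons.1 hp).1 v hv

lemma rep_mid (k z : ℕ) (l : List ℕ) :
    List.replicate k z ++ z :: l = List.replicate (k+1) z ++ l := by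
  simp [List.replicate_succ', List.append_assoc]

lemma cascade (s' k m : ℕ) :
    ∀ (ℓ x j : ℕ) (rest : List (List ℕ)), j ≤ x →
    rsInsert ((List.range ℓ).map (fun t =>
        List.replicate s' (j+t) ++ List.replicate k (x+t) ++ List.replicate (m+1) (x+t+1)) ++ rest) x
    = (List.range ℓ).map (fun t =>
        List.replicate s' (j+t) ++ List.replicate (k+1) (x+t) ++ List.replicate m (x+t+1))
      ++ rsInsert rest (x+ℓ) := by
  intro ℓ
  induction ℓ with
  | zero => intro x j rest h; simp
  | succ n ih =>
    intro x j rest h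
    rw [List.range_succ_eq_map]
    simp only [List.map_cons, List.map_map, List.cons_append]
    have hrow : List.replicate s' (j+0) ++ List.replicate k (x+0) ++ List.replicate (m+1) (x+0+1)
        = (List.replicate s' j ++ List.replicate k x) ++ ((x+1) :: List.replicate m (x+1)) := by
      simp [List.replicate_succ, List.append_assoc]
    rw [hrow, rsInsert_bump _ _ _ x (x+1) (Nat.lt_succ_self x)
      (by intro z hz; rcases List.mem_append.1 hz with hz | hz <;>
        simp_all [List.eq_of_mem_replicate hz] <;> omega)]
    have htail : (List.range n).map ((fun t =>
        List.replicate s' (j+t) ++ List.replicate k (x+t) ++ List.replicate (m+1) (x+t+1)) ∘ Nat.succ)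
        = (List.range n).map (fun t =>
        List.replicate s' ((j+1)+t) ++ List.replicate k ((x+1)+t) ++ List.replicate (m+1) ((x+1)+t+1)) := by
      apply List.map_congr_left
      intro t _
      simp only [Function.comp_apply, Nat.succ_eq_add_one,
        show j+(t+1) = (j+1)+t from by omega, show x+(t+1) = (x+1)+t from by omega]
    rw [htail, ih (x+1) (j+1) rest (by omega)]
    have htail2 : (List.range n).map (fun t =>
        List.replicate s' ((j+1)+t) ++ List.replicate (k+1) ((x+1)+t) ++ List.replicate m ((x+1)+t+1))
        = (List.range n).map ((fun t =>
        List.replicate s' (j+t) ++ List.replicate (k+1) (x+t) ++ List.replicate m (x+t+1)) ∘ Nat.succ) := by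
      apply List.map_congr_left
      intro t _
      simp only [Function.comp_apply, Nat.succ_eq_add_one,
        show j+(t+1) = (j+1)+t from by omega, show x+(t+1) = (x+1)+t from by omega]
    rw [htail2]
    have : (x+1)+n = x+(n+1) := by omega
    rw [this]
    congr 1
    simp [List.append_assoc, rep_mid]

lemma stage (s' : ℕ) :
    ∀ (b : List ℕ) (x j k ℓ : ℕ) (rest : List (List ℕ)), j ≤ x → (∀ y ∈ b, x + ℓ < y) →
    rsInsertWord ((List.range ℓ).map (fun t =>
        List.replicate s' (j+t) ++ List.replicate k (x+t) ++ List.replicate b.length (x+t+1))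
      ++ (List.replicate s' (j+ℓ) ++ List.replicate k (x+ℓ) ++ b) :: rest) (List.replicate b.length x)
    = (List.range ℓ).map (fun t => List.replicate s' (j+t) ++ List.replicate (k+b.length) (x+t))
      ++ (List.replicate s' (j+ℓ) ++ List.replicate (k+b.length) (x+ℓ)) :: rsInsertWord rest b := by
  intro b
  induction b with
  | nil =>
    intro x j k ℓ rest hjx hb
    simp [rsInsertWord]
  | cons y b ih =>
    intro x j k ℓ rest hjx hb
    have hlen : (y :: b).length = b.length + 1 := rfl
    rw [hlen, List.replicate_succ, rsInsertWord_cons]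
    have hc := cascade s' k b.length ℓ x j
      ((List.replicate s' (j+ℓ) ++ List.replicate k (x+ℓ) ++ (y :: b)) :: rest) hjx
    rw [hc]
    have hbump : rsInsert ((List.replicate s' (j+ℓ) ++ List.replicate k (x+ℓ) ++ (y :: b)) :: rest) (x+ℓ)
        = (List.replicate s' (j+ℓ) ++ List.replicate (k+1) (x+ℓ) ++ b) :: rsInsert rest y := by
      have := rsInsert_bump (List.replicate s' (j+ℓ) ++ List.replicate k (x+ℓ)) b rest (x+ℓ) y
        (hb y (by simp))
        (by intro z hz; rcases List.mem_append.1 hz with hz | hz <;>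
          have := List.eq_of_mem_replicate hz <;> omega)
      simpa [List.append_assoc, rep_mid] using this
    rw [hbump, ih (x) (j) (k+1) ℓ (rsInsert rest y) hjx
      (fun u hu => hb u (List.mem_cons_of_mem _ hu))]
    have : k + 1 + b.length = k + (b.length + 1) := by omega
    rw [this]
    rfl


lemma rowWord_highest_succ (i s : ℕ) :
    rowWord (highestTab (i+1) s) = List.replicate s (i+1) ++ rowWord (highestTab i s) := by
  simp [rowWord, highestTab, List.range_succ]

lemma stages (s s' : ℕ) (brow last : List ℕ) (hlen : brow.length = s)
    (hsort : List.Pairwise (· ≤ ·) brow) :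
    ∀ (i ℓ : ℕ), (∀ y ∈ brow, i + 1 + ℓ < y) →
    rsInsertWord ((List.range ℓ).map (fun t =>
        List.replicate s' (1+t) ++ List.replicate s (i+2+t))
        ++ (List.replicate s' (1+ℓ) ++ brow)
          :: ((List.range i).map (fun t => List.replicate s' (ℓ+2+t)) ++ [last]))
      (rowWord (highestTab (i+1) s))
    = (List.range (ℓ+i+1)).map (fun t => List.replicate s' (1+t) ++ List.replicate s (1+t))
      ++ rsInsertWord [last] brow := by
  intro i
  induction i with
  | zero =>
    intro ℓ hb
    rw [rowWord_highest_succ]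
    have h0 : rowWord (highestTab 0 s) = [] := rfl
    rw [h0, List.append_nil]
    have hst := stage s' brow 1 1 0 ℓ [last] le_rfl (fun y hy => by have := hb y hy; omega)
    rw [hlen] at hst
    have e1 : (List.range ℓ).map (fun t => List.replicate s' (1+t) ++ List.replicate s (0+2+t))
        = (List.range ℓ).map (fun t => List.replicate s' (1+t) ++ List.replicate 0 (1+t)
            ++ List.replicate s (1+t+1)) := by
      apply List.map_congr_left
      intro t _
      simp [show 0+2+t = 1+t+1 from by omega]
    rw [e1]
    have e2 : (List.replicate s' (1+ℓ) ++ brow)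
        = (List.replicate s' (1+ℓ) ++ List.replicate 0 (1+ℓ) ++ brow) := by simp
    rw [e2]
    simp only [List.range_zero, List.map_nil, List.nil_append, Nat.zero_add]
    rw [hst]
    rw [show ℓ+0+1 = ℓ+1 from by omega, List.range_succ, List.map_append]
    simp [List.append_assoc]
  | succ i ih =>
    intro ℓ hb
    rw [rowWord_highest_succ, rsInsertWord_append]
    have hst := stage s' brow (i+2) 1 0 ℓ
      ((List.range (i+1)).map (fun t => List.replicate s' (ℓ+2+t)) ++ [last])
      (by omega) (fun y hy => by have := hb y hy; omega)
    rw [hlen] at hst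
    have e1 : (List.range ℓ).map (fun t => List.replicate s' (1+t) ++ List.replicate s (i+1+2+t))
        = (List.range ℓ).map (fun t => List.replicate s' (1+t) ++ List.replicate 0 ((i+2)+t)
            ++ List.replicate s ((i+2)+t+1)) := by
      apply List.map_congr_left
      intro t _
      simp [show i+1+2+t = i+2+t+1 from by omega]
    rw [e1]
    have e2 : (List.replicate s' (1+ℓ) ++ brow)
        = (List.replicate s' (1+ℓ) ++ List.replicate 0 ((i+2)+ℓ) ++ brow) := by simp
    rw [e2, hst]
    -- now handle the bottom: rsInsertWord (pristine ++ [last]) brow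
    have hrest : (List.range (i+1)).map (fun t => List.replicate s' (ℓ+2+t))
        = List.replicate s' (ℓ+2) :: (List.range i).map (fun t => List.replicate s' (ℓ+3+t)) := by
      rw [List.range_succ_eq_map, List.map_cons, List.map_map]
      congr 1
      apply List.map_congr_left
      intro t _
      simp [show ℓ+2+(t+1) = ℓ+3+t from by omega, Nat.succ_eq_add_one]
    rw [hrest, List.cons_append,
      rsInsertWord_row _ brow (List.replicate s' (ℓ+2)) hsort
        (fun z hz u hu => by have := List.eq_of_mem_replicate hz; have := hb u hu; omega)]
    -- reassemble for ih with ℓ+1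
    have e3 : ∀ (K : ℕ), (List.range ℓ).map (fun t => List.replicate s' (1+t) ++ List.replicate (0+s) ((i+2)+t))
        ++ (List.replicate s' (1+ℓ) ++ List.replicate (0+s) ((i+2)+ℓ))
          :: ((List.replicate s' (ℓ+2) ++ brow)
            :: ((List.range i).map (fun t => List.replicate s' (ℓ+3+t)) ++ [last]))
        = (List.range (ℓ+1)).map (fun t => List.replicate s' (1+t) ++ List.replicate s (i+2+t))
          ++ (List.replicate s' (1+(ℓ+1)) ++ brow)
            :: ((List.range i).map (fun t => List.replicate s' ((ℓ+1)+2+t)) ++ [last]) := by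
      intro K
      rw [List.range_succ, List.map_append]
      simp only [List.map_cons, List.map_nil, List.append_assoc, List.singleton_append,
        List.cons_append, List.nil_append, Nat.zero_add]
      simp [show ℓ+2 = 1+(ℓ+1) from by omega, show ∀ t, ℓ+3+t = ℓ+1+2+t from fun t => by omega]
    rw [e3 0, ih (ℓ+1) (fun y hy => by have := hb y hy; omega),
      show ℓ+1+i+1 = ℓ+(i+1)+1 from by omega]

def tab2 (c P Q K : ℕ) : List (List ℕ) :=
  (List.replicate P c ++ List.replicate Q (c+1)) :: (if K = 0 then [] else [List.replicate K (c+1)])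

lemma tab2_push (c K : ℕ) :
    rsInsert (if K = 0 then [] else [List.replicate K (c+1)]) (c+1)
      = [List.replicate (K+1) (c+1)] := by
  cases K with
  | zero => simp [rsInsert]
  | succ n =>
    simp only [Nat.succ_ne_zero, if_false]
    rw [rsInsert_app _ _ (c+1) (fun z hz => by rw [List.eq_of_mem_replicate hz])]
    simp [List.replicate_succ']

lemma a1_ones (c : ℕ) : ∀ (p p' q' K : ℕ),
    rsInsertWord (tab2 c p' q' K) (List.replicate p c) = tab2 c (p'+p) (q'-p) (K + min p q') := by
  intro p
  induction p with
  | zero => intro p' q' K; simp [rsInsertWord]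
  | succ n ih =>
    intro p' q' K
    rw [List.replicate_succ, rsInsertWord_cons]
    cases q' with
    | zero =>
      have : rsInsert (tab2 c p' 0 K) c = tab2 c (p'+1) 0 K := by
        unfold tab2
        rw [List.replicate_zero, List.append_nil,
          rsInsert_app _ _ c (fun z hz => by rw [List.eq_of_mem_replicate hz])]
        simp [List.replicate_succ']
      rw [this, ih]
      simp only [Nat.min_zero, Nat.add_zero, Nat.zero_sub,
        show p'+1+n = p'+(n+1) from by omega, Nat.sub_zero]
    | succ m =>
      have : rsInsert (tab2 c p' (m+1) K) c = tab2 c (p'+1) m (K+1) := by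
        unfold tab2
        rw [List.replicate_succ,
          rsInsert_bump (List.replicate p' c) (List.replicate m (c+1)) _ c (c+1)
            (Nat.lt_succ_self c) (fun z hz => by rw [List.eq_of_mem_replicate hz]),
          tab2_push]
        simp [rep_mid, Nat.succ_ne_zero]
      rw [this, ih]
      unfold tab2
      rw [show p'+1+n = p'+(n+1) from by omega,
        show K+1+min n m = K + min (n+1) (m+1) from by omega,
        show m - n = m+1-(n+1) from by omega]

lemma a1_twos (c : ℕ) : ∀ (q p' q' K : ℕ),
    rsInsertWord (tab2 c p' q' K) (List.replicate q (c+1)) = tab2 c p' (q'+q) K := by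
  intro q
  induction q with
  | zero => intro p' q' K; simp [rsInsertWord]
  | succ n ih =>
    intro p' q' K
    rw [List.replicate_succ, rsInsertWord_cons]
    have : rsInsert (tab2 c p' q' K) (c+1) = tab2 c p' (q'+1) K := by
      unfold tab2
      rw [rsInsert_app _ _ (c+1) (fun z hz => by
        rcases List.mem_append.1 hz with hz | hz <;>
          have := List.eq_of_mem_replicate hz <;> omega)]
      simp [List.append_assoc, List.replicate_succ']
    rw [this, ih, show q'+1+n = q'+(n+1) from by omega]

lemma a1_full (c p q p' q' : ℕ) :
    rsInsertWord [List.replicate p' c ++ List.replicate q' (c+1)]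
      (List.replicate p c ++ List.replicate q (c+1))
    = tab2 c (p'+p) ((q'-p)+q) (min p q') := by
  have h0 : [List.replicate p' c ++ List.replicate q' (c+1)] = tab2 c p' q' 0 := by
    simp [tab2]
  rw [h0, rsInsertWord_append, a1_ones, a1_twos, Nat.zero_add]

lemma two_letter (c : ℕ) : ∀ (l : List ℕ), List.Chain' (· ≤ ·) l →
    (∀ x ∈ l, x = c+1 ∨ x = c+2) →
    ∃ p q, l = List.replicate p (c+1) ++ List.replicate q (c+2) := by
  intro l
  induction l with
  | nil => intro _ _; exact ⟨0, 0, rfl⟩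
  | cons x l ih =>
    intro hc he
    obtain ⟨p, q, hl⟩ := ih hc.tail (fun u hu => he u (List.mem_cons_of_mem _ hu))
    rcases he x List.mem_cons_self with hx | hx
    · subst hx
      exact ⟨p+1, q, by rw [hl, List.replicate_succ]; rfl⟩
    · subst hx
      have hp : p = 0 := by
        by_contra hp
        obtain ⟨p', rfl⟩ := Nat.exists_eq_succ_of_ne_zero hp
        rw [hl] at hc
        rw [List.replicate_succ, List.cons_append] at hc
        have := (List.isChain_cons_cons.1 hc).1
        omega
      subst hp
      simp only [List.replicate_zero, List.nil_append] at hl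
      refine ⟨0, q+1, ?_⟩
      rw [hl, List.replicate_succ]
      rfl

lemma getD_map_range (n j : ℕ) (f : ℕ → List ℕ) (h : j < n) :
    ((List.range n).map f).getD j [] = f j := by
  rw [List.getD_eq_getElem?_getD]
  simp [List.getElem?_map, List.getElem?_range h]

lemma getD_past (l : List (List ℕ)) (i : ℕ) (h : l.length ≤ i) : l.getD i [] = [] := by
  rw [List.getD_eq_getElem?_getD, List.getElem?_eq_none h]; rfl

lemma shapeAt_v (s i : ℕ) (brow : List ℕ) (hlen : brow.length = s) (j : ℕ) :
    shapeAt (highestTab (i+1) s ++ [brow]) j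
      = if j < i+1 then s else if j = i+1 then s else 0 := by
  have hL : (highestTab (i+1) s).length = i+1 := by simp [highestTab]
  unfold shapeAt
  rcases lt_trichotomy j (i+1) with h | h | h
  · rw [List.getD_append _ _ _ _ (by omega)]
    unfold highestTab
    rw [getD_map_range _ _ _ (by omega)]
    simp [h]
  · subst h
    rw [List.getD_append_right _ _ _ _ (by omega), hL]
    simp [hlen]
  · rw [getD_past _ _ (by simp [hL]; omega)]
    rw [if_neg (by omega), if_neg (by omega)]
    rfl


/-- For rectangular tableaux `v, v'` of shapes `(a+1) × s` and `(a+1) × s'`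
whose first `a` rows are highest and whose bottom rows have entries in
`{a+1, a+2}`, the energy `H(v ⊗ v')` equals the `A_1`-type energy of the
bottom rows (after relabelling `a+1 ↦ 1`, `a+2 ↦ 2`). -/
theorem energy_reduces_to_A1 (a s s' : ℕ) (brow b'row : List ℕ)
    (hlen : brow.length = s) (hlen' : b'row.length = s')
    (hchain : List.Chain' (· ≤ ·) brow) (hchain' : List.Chain' (· ≤ ·) b'row)
    (hent : ∀ x ∈ brow, x = a + 1 ∨ x = a + 2)
    (hent' : ∀ x ∈ b'row, x = a + 1 ∨ x = a + 2) :
    energyH (highestTab a s ++ [brow]) (highestTab a s' ++ [b'row])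
      = energyH [brow.map (fun x => x - a)] [b'row.map (fun x => x - a)] := by
  rcases a with _ | i
  · simp [highestTab]
  · obtain ⟨p, q, hb⟩ := two_letter (i+1) brow hchain hent
    obtain ⟨p', q', hb'⟩ := two_letter (i+1) b'row hchain' hent'
    subst hb hb'
    simp only [show i+1+1 = i+2 from rfl, show i+1+2 = i+3 from rfl] at *
    have hs : p + q = s := by simpa using hlen
    have hs' : p' + q' = s' := by simpa using hlen'
    subst hs hs'
    have hpair : List.Pairwise (· ≤ ·) (List.replicate p (i+2) ++ List.replicate q (i+3)) :=
      List.isChain_iff_pairwise.1 hchain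
    -- map to {1,2}
    have hmap : (List.replicate p (i+2) ++ List.replicate q (i+3)).map (fun x => x - (i+1))
        = List.replicate p 1 ++ List.replicate q 2 := by
      simp [List.map_replicate, show i+2-(i+1) = 1 from by omega, show i+3-(i+1) = 2 from by omega]
    have hmap' : (List.replicate p' (i+2) ++ List.replicate q' (i+3)).map (fun x => x - (i+1))
        = List.replicate p' 1 ++ List.replicate q' 2 := by
      simp [List.map_replicate, show i+2-(i+1) = 1 from by omega, show i+3-(i+1) = 2 from by omega]
    rw [hmap, hmap']
    -- compute LHS tableau
    have hT0 : highestTab (i+1) (p'+q') ++ [List.replicate p' (i+2) ++ List.replicate q' (i+3)]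
        = List.replicate (p'+q') 1 ::
          ((List.range i).map (fun t => List.replicate (p'+q') (2+t))
            ++ [List.replicate p' (i+2) ++ List.replicate q' (i+3)]) := by
      unfold highestTab
      rw [List.range_succ_eq_map, List.map_cons, List.map_map, List.cons_append]
      simp only [Nat.zero_add]
      congr 2
      apply List.map_congr_left
      intro t _
      simp [Nat.succ_eq_add_one, show t+1+1 = 2+t from by omega]
    have hstg := stages (p+q) (p'+q')
      (List.replicate p (i+2) ++ List.replicate q (i+3))
      (List.replicate p' (i+2) ++ List.replicate q' (i+3))
      (by simp) hpair i 0
      (by intro y hy; rcases List.mem_append.1 hy with hy | hy <;>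
        have := List.eq_of_mem_replicate hy <;> omega)
    simp only [List.range_zero, List.map_nil, List.nil_append, Nat.add_zero, Nat.zero_add] at hstg
    have hA1 : rsInsertWord [List.replicate p' (i+2) ++ List.replicate q' (i+3)]
        (List.replicate p (i+2) ++ List.replicate q (i+3))
        = tab2 (i+2) (p'+p) ((q'-p)+q) (min p q') := by
      have := a1_full (i+2) p q p' q'
      simpa [show i+2+1 = i+3 from rfl] using this
    have hZ : rsInsertWord (highestTab (i+1) (p'+q')
          ++ [List.replicate p' (i+2) ++ List.replicate q' (i+3)])
        (rowWord (highestTab (i+1) (p+q)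
          ++ [List.replicate p (i+2) ++ List.replicate q (i+3)]))
        = (List.range (i+1)).map (fun t =>
            List.replicate (p'+q') (1+t) ++ List.replicate (p+q) (1+t))
          ++ tab2 (i+2) (p'+p) ((q'-p)+q) (min p q') := by
      rw [show rowWord (highestTab (i+1) (p+q)
            ++ [List.replicate p (i+2) ++ List.replicate q (i+3)])
          = (List.replicate p (i+2) ++ List.replicate q (i+3))
            ++ rowWord (highestTab (i+1) (p+q)) from by simp [rowWord],
        rsInsertWord_append, hT0,
        rsInsertWord_row _ _ _ hpair (by
          intro z hz u hu
          have hz1 := List.eq_of_mem_replicate hz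
          rcases List.mem_append.1 hu with hu | hu <;>
            have := List.eq_of_mem_replicate hu <;> omega),
        hstg, hA1]
    have hA1' : rsInsertWord [List.replicate p' 1 ++ List.replicate q' 2]
        (List.replicate p 1 ++ List.replicate q 2)
        = tab2 1 (p'+p) ((q'-p)+q) (min p q') := by
      have := a1_full 1 p q p' q'
      simpa using this
    -- energy computation
    unfold energyH
    simp only [show rowWord [List.replicate p 1 ++ List.replicate q 2]
        = List.replicate p 1 ++ List.replicate q 2 from by simp [rowWord], hZ, hA1']
    set K := p ⊓ q' with hKdef
    set Z := (List.range (i+1)).map (fun t =>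
        List.replicate (p'+q') (1+t) ++ List.replicate (p+q) (1+t))
      ++ tab2 (i+2) (p'+p) ((q'-p)+q) K with hZdef
    set Z' := tab2 1 (p'+p) ((q'-p)+q) K with hZ'def
    have hAlen : ((List.range (i+1)).map (fun t =>
        List.replicate (p'+q') (1+t) ++ List.replicate (p+q) (1+t))).length = i+1 := by simp
    have hsh1 : ∀ j, j < i+1 → shapeAt Z j = (p'+q') + (p+q) := by
      intro j hj
      rw [hZdef]
      unfold shapeAt
      rw [List.getD_append _ _ _ _ (by rw [hAlen]; omega), getD_map_range _ _ _ hj]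
      simp
    have hsh2 : shapeAt Z (i+1) = (p'+p) + ((q'-p)+q) := by
      rw [hZdef]
      unfold shapeAt
      rw [List.getD_append_right _ _ _ _ (by rw [hAlen])]
      rw [hAlen, Nat.sub_self]
      simp [tab2]
    have hsh3 : K ≠ 0 → shapeAt Z (i+2) = K := by
      intro hK0
      rw [hZdef]
      unfold shapeAt
      rw [List.getD_append_right _ _ _ _ (by rw [hAlen]; omega)]
      rw [hAlen, show i+2-(i+1) = 1 from by omega]
      simp [tab2, hK0]
    have hZ'0 : shapeAt Z' 0 = (p'+p) + ((q'-p)+q) := by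
      rw [hZ'def]; simp [tab2, shapeAt]
    have hZ'1 : K ≠ 0 → shapeAt Z' 1 = K := by
      intro h; rw [hZ'def]; simp [tab2, shapeAt, h]
    have hsingle : ∀ (l : List ℕ) (j : ℕ), 1 ≤ j → shapeAt [l] j = 0 := by
      intro l j hj
      unfold shapeAt
      rw [getD_past _ _ (by simpa using hj)]
      rfl
    have hsingle0 : ∀ (l : List ℕ), shapeAt [l] 0 = l.length := fun l => rfl
    have hzero : ∀ j, j < i+2 →
        shapeAt Z j
          - (shapeAt (highestTab (i+1) (p+q)
              ++ [List.replicate p (i+2) ++ List.replicate q (i+3)]) j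
            + shapeAt (highestTab (i+1) (p'+q')
              ++ [List.replicate p' (i+2) ++ List.replicate q' (i+3)]) j) = 0 := by
      intro j hj
      rw [shapeAt_v _ _ _ (by simp) j, shapeAt_v _ _ _ (by simp) j]
      rcases Nat.lt_or_ge j (i+1) with h | h
      · rw [hsh1 j h, if_pos h, if_pos h]; omega
      · have hj1 : j = i+1 := by omega
        subst hj1
        rw [hsh2, if_neg (lt_irrefl _), if_pos rfl, if_neg (lt_irrefl _), if_pos rfl]
        omega
    by_cases hK0 : K = 0
    · have hZlen : Z.length = i+2 := by
        rw [hZdef, List.length_append, hAlen]; simp [tab2, hK0]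
      have hZ'len : Z'.length = 1 := by rw [hZ'def]; simp [tab2, hK0]
      rw [hZlen, hZ'len]
      refine Eq.trans (Finset.sum_eq_zero ?_) (Finset.sum_eq_zero ?_).symm
      · intro j hj
        exact hzero j (by simpa using hj)
      · intro j hj
        simp only [Finset.mem_range] at hj
        have : j = 0 := by omega
        subst this
        rw [hZ'0, hsingle0, hsingle0]
        simp only [List.length_append, List.length_replicate]
        omega
    · have hZlen : Z.length = i+3 := by
        rw [hZdef, List.length_append, hAlen]; simp [tab2, hK0]
      have hZ'len : Z'.length = 2 := by rw [hZ'def]; simp [tab2, hK0]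
      rw [hZlen, hZ'len, Finset.sum_range_succ, Finset.sum_range_succ (n := 1),
        Finset.sum_range_one]
      rw [Finset.sum_eq_zero (fun j hj => hzero j (by simpa using hj))]
      rw [hsh3 hK0, hZ'0, hZ'1 hK0, hsingle0, hsingle0,
        hsingle _ 1 le_rfl, hsingle _ 1 le_rfl,
        shapeAt_v _ _ _ (by simp) (i+2), shapeAt_v _ _ _ (by simp) (i+2),
        if_neg (by omega), if_neg (by omega), if_neg (by omega), if_neg (by omega)]
      simp only [List.length_append, List.length_replicate]
      omega
end

section
/- For any rectangular semistandard tableau v of shape (s^r) over {1,…,n+1}, the insertion of the row word of v into the highest tableau u_k^{(a)} fills in the pattern: if r ≤ a the resulting tableau has shape equal to the concatenation of (k^a) and (s^r) with the i-th row equal to i's followed by the i-th row of v (for i ≤ r) and all i's for r < i ≤ a; hence H(v ⊗ u_k^{(a)}) = 0 — equivalently shape((u_k^{(a)} ← row(v))) = concatenation of (k^a) and (s^r). -/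
/-! ### Auxiliary machinery -/

lemma insertRow_append (l : List ℕ) (x : ℕ) (hl : ∀ e ∈ l, e ≤ x) :
    insertRow l x = (l ++ [x], none) := by
  induction l with
  | nil => rfl
  | cons y ys ih =>
    have hy : ¬ x < y := Nat.not_lt.mpr (hl y (by simp))
    simp [insertRow, hy, ih fun e he => hl e (List.mem_cons_of_mem _ he)]

lemma insertRow_bump_s13 (l q : List ℕ) (h x : ℕ) (hl : ∀ e ∈ l, e ≤ x) (hx : x < h) :
    insertRow (l ++ h :: q) x = (l ++ x :: q, some h) := by
  induction l with
  | nil => simp [insertRow, hx]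
  | cons y ys ih =>
    have hy : ¬ x < y := Nat.not_lt.mpr (hl y (by simp))
    simp [insertRow, hy, ih fun e he => hl e (List.mem_cons_of_mem _ he)]

lemma rsInsert_cons_none (R : List ℕ) (rs : List (List ℕ)) (x : ℕ) (R' : List ℕ)
    (h : insertRow R x = (R', none)) : rsInsert (R :: rs) x = R' :: rs := by
  simp [rsInsert, h]

lemma rsInsert_cons_bump (R : List ℕ) (rs : List (List ℕ)) (x : ℕ) (R' : List ℕ) (y : ℕ)
    (h : insertRow R x = (R', some y)) : rsInsert (R :: rs) x = R' :: rsInsert rs y := by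
  simp [rsInsert, h]

/-- The partial state: `j` letters of the new top row have been inserted.
Row `i` of the stack `w` contributes `take j w_i ++ drop j w_{i+1}` after
`k` copies of the value `c + i`. -/
def stRows (k j : ℕ) : ℕ → List (List ℕ) → List (List ℕ) → List (List ℕ)
  | _, [], rest => rest
  | c, x :: w', rest =>
      (List.replicate k c ++ x.take j ++ ((w'.headD []).drop j)) :: stRows k j (c + 1) w' rest

/-- Recursive build of the tableau with `a` rows, row `i` is `k` copies of
`c + i` followed by row `i` of `st`. -/
def mkTab' (k : ℕ) : ℕ → ℕ → List (List ℕ) → List (List ℕ)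
  | _, 0, _ => []
  | c, a + 1, st => (List.replicate k c ++ st.headD []) :: mkTab' k (c + 1) a st.tail

lemma getD_head (st : List (List ℕ)) : st.getD 0 [] = st.headD [] := by
  cases st <;> rfl

lemma getD_tail (st : List (List ℕ)) (i : ℕ) : st.getD (i + 1) [] = st.tail.getD i [] := by
  cases st <;> simp [List.getD]

lemma mkTab'_eq_map (k : ℕ) : ∀ (a c : ℕ) (st : List (List ℕ)),
    mkTab' k c a st = (List.range a).map fun i => List.replicate k (c + i) ++ st.getD i [] := by
  intro a
  induction a with
  | zero => intro c st; rfl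
  | succ b ih =>
    intro c st
    rw [List.range_succ_eq_map]
    simp only [List.map_cons, List.map_map]
    rw [mkTab', ih (c + 1) st.tail]
    congr 1
    · rw [getD_head]; simp
    · apply List.map_congr_left
      intro i _
      simp only [Function.comp]
      rw [getD_tail]
      congr 2
      omega

lemma le_of_mem_take_sorted (l : List ℕ) (j : ℕ) (hj : j < l.length)
    (hs : List.Chain' (· ≤ ·) l) : ∀ e ∈ l.take j, e ≤ l.getD j 0 := by
  intro e he
  rw [List.getD_eq_getElem l 0 hj]
  obtain ⟨m, hm, rfl⟩ := List.mem_take_iff_getElem.mp he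
  exact List.pairwise_iff_getElem.mp (List.isChain_iff_pairwise.mp hs) m j
    (lt_of_lt_of_le (lt_min_iff.mp hm).2 le_rfl) hj (lt_of_lt_of_le (lt_min_iff.mp hm).1 (by omega) |>.trans_le le_rfl)

/-- The key single-letter bumping lemma. -/
lemma letter_insert (k : ℕ) : ∀ (w rest : List (List ℕ)) (c j : ℕ),
    w ≠ [] →
    (∀ row ∈ w, List.Chain' (· ≤ ·) row) →
    (∀ row ∈ w, j < row.length) →
    (∀ i, ∀ e ∈ w.getD i [], c + i ≤ e) →
    List.Chain' (fun p q => ∀ m, m < q.length → p.getD m 0 < q.getD m 0) w →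
    rsInsert (stRows k j c w rest) ((w.headD []).getD j 0) = stRows k (j + 1) c w rest := by
  intro w
  induction w with
  | nil => intro rest c j hne; exact absurd rfl hne
  | cons x w' ih =>
    intro rest c j _ hsort hlen hge hcol
    have hjx : j < x.length := hlen x (by simp)
    have hx0 : (x :: w').headD [] = x := rfl
    have hxj_mem : x.getD j 0 ∈ x := by
      rw [List.getD_eq_getElem x 0 hjx]; exact List.getElem_mem hjx
    have hle : ∀ e ∈ List.replicate k c ++ x.take j, e ≤ x.getD j 0 := by
      intro e he
      rcases List.mem_append.mp he with h | h
      · have : e = c := List.eq_of_mem_replicate h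
        subst this
        have := hge 0 (x.getD j 0) hxj_mem
        simpa using this
      · exact le_of_mem_take_sorted x j hjx (hsort x (by simp)) e h
    cases w' with
    | nil =>
      rw [hx0]
      show rsInsert ((List.replicate k c ++ x.take j ++ (([] : List (List ℕ)).headD []).drop j) :: rest) (x.getD j 0)
        = stRows k (j + 1) c [x] rest
      have hrow : List.replicate k c ++ x.take j ++ (([] : List (List ℕ)).headD []).drop j
          = (List.replicate k c ++ x.take j) := by simp
      rw [hrow]
      have hins := insertRow_append (List.replicate k c ++ x.take j) (x.getD j 0) hle
      rw [rsInsert_cons_none _ _ _ _ hins]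
      show ((List.replicate k c ++ x.take j) ++ [x.getD j 0]) :: rest = _
      have htake : x.take j ++ [x.getD j 0] = x.take (j + 1) := by
        rw [List.getD_eq_getElem x 0 hjx]
        rw [← List.take_concat_get hjx]
        simp [List.concat_eq_append]
      show ((List.replicate k c ++ x.take j) ++ [x.getD j 0]) :: rest
        = (List.replicate k c ++ x.take (j+1) ++ (([] : List (List ℕ)).headD []).drop (j+1)) :: rest
      rw [List.append_assoc, htake]
      simp
    | cons y w'' =>
      have hjy : j < y.length := hlen y (by simp)
      have hdy : y.drop j = y.getD j 0 :: y.drop (j + 1) := by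
        rw [List.getD_eq_getElem y 0 hjy]; exact List.drop_eq_getElem_cons hjy
      have hxy : x.getD j 0 < y.getD j 0 := by
        have := (List.isChain_cons_cons.mp hcol).1
        exact this j hjy
      show rsInsert ((List.replicate k c ++ x.take j ++ ((y :: w'').headD []).drop j)
            :: stRows k j (c + 1) (y :: w'') rest) (((x :: y :: w'').headD []).getD j 0)
          = stRows k (j + 1) c (x :: y :: w'') rest
      have hrow : List.replicate k c ++ x.take j ++ ((y :: w'').headD []).drop j
          = (List.replicate k c ++ x.take j) ++ (y.getD j 0 :: y.drop (j + 1)) := by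
        show List.replicate k c ++ x.take j ++ y.drop j = _
        rw [hdy, List.append_assoc]
      rw [hrow]
      have hhd : (((x :: y :: w'').headD []).getD j 0) = x.getD j 0 := rfl
      rw [hhd]
      have hins := insertRow_bump_s13 (List.replicate k c ++ x.take j) (y.drop (j + 1))
        (y.getD j 0) (x.getD j 0) hle hxy
      rw [rsInsert_cons_bump _ _ _ _ _ hins]
      have hrec : rsInsert (stRows k j (c + 1) (y :: w'') rest) (((y :: w'').headD []).getD j 0)
          = stRows k (j + 1) (c + 1) (y :: w'') rest := by
        apply ih rest (c + 1) j (by simp)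
        · intro row hr; exact hsort row (List.mem_cons_of_mem _ hr)
        · intro row hr; exact hlen row (List.mem_cons_of_mem _ hr)
        · intro i e he
          have := hge (i + 1) e (by simpa [getD_tail] using he)
          omega
        · exact (List.isChain_cons_cons.mp hcol).2
      show ((List.replicate k c ++ x.take j) ++ x.getD j 0 :: y.drop (j+1))
            :: rsInsert (stRows k j (c + 1) (y :: w'') rest) (y.getD j 0)
          = stRows k (j + 1) c (x :: y :: w'') rest
      have : ((y :: w'').headD []).getD j 0 = y.getD j 0 := rfl
      rw [← this, hrec]
      show _ = (List.replicate k c ++ x.take (j+1) ++ ((y :: w'').headD []).drop (j+1))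
            :: stRows k (j + 1) (c + 1) (y :: w'') rest
      congr 1
      have htake : x.take j ++ [x.getD j 0] = x.take (j + 1) := by
        rw [List.getD_eq_getElem x 0 hjx]
        rw [← List.take_concat_get hjx]
        simp [List.concat_eq_append]
      show (List.replicate k c ++ x.take j) ++ x.getD j 0 :: y.drop (j+1)
        = List.replicate k c ++ x.take (j+1) ++ y.drop (j+1)
      rw [← htake]
      simp [List.append_assoc]

lemma stRows_zero (k : ℕ) : ∀ (st : List (List ℕ)) (c a : ℕ) (x : List ℕ), st.length < a →
    stRows k 0 c (x :: st) (mkTab' k (c + st.length + 1) (a - (st.length + 1)) [])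
      = mkTab' k c a st := by
  intro st
  induction st with
  | nil =>
    intro c a x ha
    obtain ⟨b, rfl⟩ : ∃ b, a = b + 1 := ⟨a - 1, by omega⟩
    show (List.replicate k c ++ x.take 0 ++ (([] : List (List ℕ)).headD []).drop 0)
        :: mkTab' k (c + 0 + 1) (b + 1 - 1) [] = mkTab' k c (b + 1) []
    simp [mkTab']
  | cons y st' ih =>
    intro c a x ha
    obtain ⟨b, rfl⟩ : ∃ b, a = b + 1 := ⟨a - 1, by omega⟩
    show (List.replicate k c ++ x.take 0 ++ ((y :: st').headD []).drop 0)
        :: stRows k 0 (c + 1) (y :: st') (mkTab' k (c + (y :: st').length + 1) (b + 1 - ((y :: st').length + 1)) [])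
        = mkTab' k c (b + 1) (y :: st')
    have h1 : c + (y :: st').length + 1 = (c + 1) + st'.length + 1 := by
      simp only [List.length_cons]; omega
    have h2 : b + 1 - ((y :: st').length + 1) = b - (st'.length + 1) := by
      simp only [List.length_cons]; omega
    rw [h1, h2, ih (c + 1) b y (by simp only [List.length_cons] at ha; omega)]
    show (List.replicate k c ++ ([] : List ℕ) ++ y) :: mkTab' k (c + 1) b st'
        = (List.replicate k c ++ (y :: st').headD []) :: mkTab' k (c + 1) b (y :: st').tail
    simp

/-- Relate the `j = s` partial state to the tableau after the insertion. -/
lemma stRows_full (k s : ℕ) : ∀ (w : List (List ℕ)) (c a : ℕ), w.length ≤ a →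
    (∀ row ∈ w, row.length ≤ s) →
    stRows k s c w (mkTab' k (c + w.length) (a - w.length) [])
      = mkTab' k c a w := by
  intro w
  induction w with
  | nil => intro c a _ _; simp [stRows]
  | cons x w' ih =>
    intro c a ha hr
    obtain ⟨b, rfl⟩ : ∃ b, a = b + 1 := ⟨a - 1, by
      simp only [List.length_cons] at ha; omega⟩
    show (List.replicate k c ++ x.take s ++ ((w'.headD []).drop s))
        :: stRows k s (c + 1) w' (mkTab' k (c + (x :: w').length) (b + 1 - (x :: w').length) [])
        = mkTab' k c (b + 1) (x :: w')
    have h1 : c + (x :: w').length = (c + 1) + w'.length := by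
      simp only [List.length_cons]; omega
    have h2 : b + 1 - (x :: w').length = b - w'.length := by
      simp only [List.length_cons]; omega
    rw [h1, h2, ih (c + 1) b (by simp only [List.length_cons] at ha; omega)
      (fun row hrow => hr row (List.mem_cons_of_mem _ hrow))]
    have htk : x.take s = x := List.take_of_length_le (hr x (by simp))
    have hdp : (w'.headD []).drop s = [] := by
      cases w' with
      | nil => simp
      | cons y w'' => exact List.drop_eq_nil_of_le (hr y (by simp))
    rw [htk, hdp]
    show (List.replicate k c ++ x ++ []) :: mkTab' k (c + 1) b w'
        = (List.replicate k c ++ (x :: w').headD []) :: mkTab' k (c + 1) b (x :: w').tail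
    simp

/-- Inserting a full new top row. -/
lemma step_insert (k s a : ℕ) (x : List ℕ) (st : List (List ℕ))
    (hlen : st.length + 1 ≤ a)
    (hrowlen : ∀ row ∈ x :: st, row.length = s)
    (hsort : ∀ row ∈ x :: st, List.Chain' (· ≤ ·) row)
    (hge : ∀ i, ∀ e ∈ (x :: st).getD i [], i + 1 ≤ e)
    (hcol : List.Chain' (fun p q => ∀ m, m < q.length → p.getD m 0 < q.getD m 0) (x :: st)) :
    rsInsertWord (mkTab' k 1 a st) x = mkTab' k 1 a (x :: st) := by
  set R := mkTab' k (1 + st.length + 1) (a - (st.length + 1)) [] with hR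
  have hge' : ∀ i, ∀ e ∈ (x :: st).getD i [], 1 + i ≤ e := fun i e he => by
    have := hge i e he; omega
  have h0 : mkTab' k 1 a st = stRows k 0 1 (x :: st) R :=
    (stRows_zero k st 1 a x (by omega)).symm
  have key : ∀ j, j ≤ s → rsInsertWord (stRows k 0 1 (x :: st) R) (x.take j)
      = stRows k j 1 (x :: st) R := by
    intro j
    induction j with
    | zero => intro _; simp [rsInsertWord]
    | succ j ihj =>
      intro hj
      have hjs : j < s := by omega
      have hjx : j < x.length := by rw [hrowlen x (by simp)]; exact hjs
      have htake : x.take (j + 1) = x.take j ++ [x.getD j 0] := by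
        rw [List.getD_eq_getElem x 0 hjx, ← List.take_concat_get hjx]
        simp [List.concat_eq_append]
      rw [htake]
      show List.foldl rsInsert _ (x.take j ++ [x.getD j 0]) = _
      rw [List.foldl_append]
      have := ihj (by omega)
      rw [show List.foldl rsInsert (stRows k 0 1 (x :: st) R) (x.take j)
          = rsInsertWord (stRows k 0 1 (x :: st) R) (x.take j) from rfl, this]
      show rsInsert (stRows k j 1 (x :: st) R) (x.getD j 0) = _
      have := letter_insert k (x :: st) R 1 j (by simp) hsort
        (fun row hrow => by rw [hrowlen row hrow]; exact hjs) hge' hcol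
      simpa using this
  have hx : x.take s = x := List.take_of_length_le (le_of_eq (hrowlen x (by simp)))
  calc rsInsertWord (mkTab' k 1 a st) x
      = rsInsertWord (stRows k 0 1 (x :: st) R) (x.take s) := by rw [h0, hx]
    _ = stRows k s 1 (x :: st) R := key s le_rfl
    _ = mkTab' k 1 a (x :: st) :=
        stRows_full k s (x :: st) 1 a (by simpa using hlen)
          (fun row hrow => le_of_eq (hrowlen row hrow))

lemma main_aux (k a s : ℕ) : ∀ (w : List (List ℕ)),
    w.length ≤ a →
    (∀ row ∈ w, row.length = s) →
    (∀ row ∈ w, List.Chain' (· ≤ ·) row) →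
    (∀ i, ∀ e ∈ w.getD i [], i + 1 ≤ e) →
    List.Chain' (fun p q => ∀ m, m < q.length → p.getD m 0 < q.getD m 0) w →
    rsInsertWord (mkTab' k 1 a []) w.reverse.flatten = mkTab' k 1 a w := by
  intro w
  induction w with
  | nil => intro _ _ _ _ _; simp [rsInsertWord]
  | cons x w' ih =>
    intro hlen hrl hsort hge hcol
    have hflat : (x :: w').reverse.flatten = w'.reverse.flatten ++ x := by
      simp
    rw [hflat]
    show List.foldl rsInsert _ (w'.reverse.flatten ++ x) = _
    rw [List.foldl_append]
    have ihw : List.foldl rsInsert (mkTab' k 1 a []) w'.reverse.flatten = mkTab' k 1 a w' := by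
      apply ih (by simp at hlen; omega)
        (fun row hr => hrl row (List.mem_cons_of_mem _ hr))
        (fun row hr => hsort row (List.mem_cons_of_mem _ hr))
        (fun i e he => by
          have := hge (i + 1) e (by simpa [getD_tail] using he)
          omega)
        hcol.tail
    rw [ihw]
    exact step_insert k s a x w' (by simpa using hlen) hrl hsort hge hcol

lemma entries_ge (v : List (List ℕ)) (s : ℕ)
    (hrl : ∀ row ∈ v, row.length = s)
    (hpos : ∀ row ∈ v, ∀ x ∈ row, 1 ≤ x)
    (hcol : List.Chain' (fun p q => ∀ m, m < q.length → p.getD m 0 < q.getD m 0) v) :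
    ∀ i, ∀ e ∈ v.getD i [], i + 1 ≤ e := by
  have main : ∀ i (hi : i < v.length) (c : ℕ) (hc : c < (v[i]).length), i + 1 ≤ v[i][c] := by
    intro i
    induction i with
    | zero =>
      intro hi c hc
      exact hpos v[0] (List.getElem_mem hi) _ (List.getElem_mem hc)
    | succ i ihi =>
      intro hi c hc
      have hi' : i < v.length := by omega
      have hchain := List.isChain_iff_getElem.mp hcol i (by omega)
      have hc' : c < (v[i]).length := by
        rw [hrl v[i] (List.getElem_mem hi')]
        rw [hrl v[i+1] (List.getElem_mem hi)] at hc
        exact hc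
      have hlt : (v[i]).getD c 0 < (v[i+1]).getD c 0 := by
        have := hchain c
        exact this hc
      rw [List.getD_eq_getElem _ 0 hc', List.getD_eq_getElem _ 0 hc] at hlt
      have := ihi hi' c hc'
      omega
  intro i e he
  by_cases hi : i < v.length
  · rw [List.getD_eq_getElem v [] hi] at he
    obtain ⟨c, hc, rfl⟩ := List.mem_iff_getElem.mp he
    exact main i hi c hc
  · rw [List.getD_eq_default v [] (by omega)] at he
    simp at he

lemma highestTab_eq (a k : ℕ) : highestTab a k = mkTab' k 1 a [] := by
  rw [mkTab'_eq_map, highestTab]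
  apply List.map_congr_left
  intro i _
  simp [Nat.add_comm]

/-- For a rectangular tableau `v` of shape `(s^r)` with `r ≤ a`, inserting the
row word of `v` into `u_k^{(a)}` produces the tableau whose `i`-th row is `k`
copies of `i+1` followed by the `i`-th row of `v`; hence `H(v ⊗ u_k^{(a)}) = 0`. -/
theorem insert_rowWord_into_highest (r s a k n : ℕ) (v : List (List ℕ))
    (hv : IsSSYT v)
    (hshape : v.map List.length = List.replicate r s)
    (hent : ∀ row ∈ v, ∀ x ∈ row, 1 ≤ x ∧ x ≤ n + 1)
    (hra : r ≤ a) :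
    rsInsertWord (highestTab a k) (rowWord v)
      = (List.range a).map (fun i => List.replicate k (i + 1) ++ v.getD i []) ∧
    energyH v (highestTab a k) = 0 := by
  obtain ⟨hsort, hne, hchain⟩ := hv
  have hrep := List.eq_replicate_iff.mp hshape
  have hvlen : v.length = r := by simpa using hrep.1
  have hrl : ∀ row ∈ v, row.length = s := by
    intro row hrow
    exact hrep.2 row.length (List.mem_map_of_mem (f := List.length) hrow)
  have hcol : List.Chain' (fun p q => ∀ m, m < q.length → p.getD m 0 < q.getD m 0) v :=
    hchain.imp (fun _ _ h m hm => h.2 m hm)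
  have hge : ∀ i, ∀ e ∈ v.getD i [], i + 1 ≤ e :=
    entries_ge v s hrl (fun row hrow x hx => (hent row hrow x hx).1) hcol
  have hmain : rsInsertWord (highestTab a k) (rowWord v) = mkTab' k 1 a v := by
    rw [highestTab_eq, rowWord]
    exact main_aux k a s v (hvlen ▸ hra) hrl hsort hge hcol
  have hrhs : mkTab' k 1 a v
      = (List.range a).map (fun i => List.replicate k (i + 1) ++ v.getD i []) := by
    rw [mkTab'_eq_map]
    apply List.map_congr_left
    intro i _
    simp [Nat.add_comm]
  have h1 : rsInsertWord (highestTab a k) (rowWord v)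
      = (List.range a).map (fun i => List.replicate k (i + 1) ++ v.getD i []) := by
    rw [hmain, hrhs]
  refine ⟨h1, ?_⟩
  unfold energyH
  simp only [h1]
  apply Finset.sum_eq_zero
  intro i hi
  have hia : i < a := by
    simpa using (Finset.mem_range.mp hi)
  have hZ : ((List.range a).map (fun i => List.replicate k (i + 1) ++ v.getD i [])).getD i []
      = List.replicate k (i + 1) ++ v.getD i [] := by
    rw [List.getD_eq_getElem _ [] (by simpa using hia)]
    simp
  have hH : (highestTab a k).getD i [] = List.replicate k (i + 1) := by
    rw [highestTab, List.getD_eq_getElem _ [] (by simpa using hia)]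
    simp
  simp only [shapeAt]
  rw [hZ, hH]
  simp only [List.length_append, List.length_replicate]
  omega
end
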